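/- Let E be a finite-dimensional real inner product space, Φ₊ a finite set of nonzero vectors of E, and let a₊ = {x ∈ E : ⟨α, x⟩ > 0 for all α ∈ Φ₊} and j(x) = −2 Σ_{α∈Φ₊} log sinh⟨α, x⟩ for x ∈ a₊. Fix constants δ₀, M, D, k > 0 and a subset S ⊆ Φ₊. Then there exists ε > 0, depending only on Φ₊, δ₀, M, D and k, with the following property: for every convex differentiable function ψ : a₊ → ℝ with ‖∇ψ(x)‖ ≤ M for all x ∈ a₊, every x₀ ∈ a₊ with ⟨α, x₀⟩ ≥ δ₀ for all α ∈ Φ₊, and every x ∈ a₊ with ‖x − x₀‖ ≤ D and (ψ + j)(x) ≤ (ψ + j)(x₀) + k, one has ⟨α', x⟩ ≥ ε for every α' ∈ S. -/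

import Mathlib

open scoped RealInnerProductSpace

/-- Key analytic estimate: `log (sinh t) ≤ log (sinh a) + h + log (1 + coth δ)`
for `δ ≤ a`, `0 < t ≤ a + h`, `0 ≤ h`. -/
lemma logsinh_aux (δ a t h : ℝ) (hδ : 0 < δ) (ha : δ ≤ a) (ht0 : 0 < t)
    (ht : t ≤ a + h) (hh : 0 ≤ h) :
    Real.log (Real.sinh t) ≤
      Real.log (Real.sinh a) + h + Real.log (1 + Real.cosh δ / Real.sinh δ) := by
  have hsδ : 0 < Real.sinh δ := Real.sinh_pos_iff.2 hδ
  have hsa : 0 < Real.sinh a := Real.sinh_pos_iff.2 (hδ.trans_le ha)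
  have hst : 0 < Real.sinh t := Real.sinh_pos_iff.2 ht0
  have hcδ : 0 < Real.cosh δ := Real.cosh_pos δ
  -- cosh a ≤ (cosh δ / sinh δ) * sinh a
  have hsub : 0 ≤ Real.sinh (a - δ) := Real.sinh_nonneg_iff.2 (by linarith)
  rw [Real.sinh_sub] at hsub
  have hcoth : Real.cosh a * Real.sinh δ ≤ Real.sinh a * Real.cosh δ := by linarith
  have hee : Real.exp (-h) ≤ Real.exp h := Real.exp_le_exp.2 (by linarith)
  have hch : Real.cosh h ≤ Real.exp h := by
    have := Real.exp_pos (-h)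
    rw [Real.cosh_eq]; linarith
  have hsh : Real.sinh h ≤ Real.exp h := by
    have := Real.exp_pos (-h)
    rw [Real.sinh_eq]; linarith
  have hsh0 : 0 ≤ Real.sinh h := Real.sinh_nonneg_iff.2 hh
  have heh : 0 < Real.exp h := Real.exp_pos h
  have hca : 0 < Real.cosh a := Real.cosh_pos a
  have key : Real.sinh t ≤ Real.sinh a * (Real.exp h * (1 + Real.cosh δ / Real.sinh δ)) := by
    have h1 : Real.sinh t ≤ Real.sinh (a + h) := Real.sinh_le_sinh.2 ht
    rw [Real.sinh_add] at h1
    have h2 : Real.cosh a * Real.sinh h ≤ (Real.sinh a * Real.cosh δ / Real.sinh δ) * Real.sinh h := by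
      apply mul_le_mul_of_nonneg_right _ hsh0
      rw [le_div_iff₀ hsδ]; linarith
    have h3 : Real.sinh a * Real.cosh h ≤ Real.sinh a * Real.exp h :=
      mul_le_mul_of_nonneg_left hch hsa.le
    have h4 : (Real.sinh a * Real.cosh δ / Real.sinh δ) * Real.sinh h
        ≤ (Real.sinh a * Real.cosh δ / Real.sinh δ) * Real.exp h := by
      apply mul_le_mul_of_nonneg_left hsh
      positivity
    have : Real.sinh a * (Real.exp h * (1 + Real.cosh δ / Real.sinh δ))
        = Real.sinh a * Real.exp h + (Real.sinh a * Real.cosh δ / Real.sinh δ) * Real.exp h := by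
      field_simp
    rw [this]; linarith
  calc Real.log (Real.sinh t)
      ≤ Real.log (Real.sinh a * (Real.exp h * (1 + Real.cosh δ / Real.sinh δ))) :=
        Real.log_le_log hst key
    _ = Real.log (Real.sinh a) + h + Real.log (1 + Real.cosh δ / Real.sinh δ) := by
        rw [Real.log_mul hsa.ne' (by positivity), Real.log_mul heh.ne' (by positivity),
          Real.log_exp]; ring

/-- Quantitative version of Lemma 3.2: points of a bounded sublevel set of
`w = ψ + j` around a point `x₀` at distance `≥ δ₀` from the Weyl walls stay at
a uniform distance `ε` (depending only on `Φ₊, δ₀, M, D, k`) from the walls. -/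
theorem stmt12 {E : Type*} [NormedAddCommGroup E] [InnerProductSpace ℝ E]
    [FiniteDimensional ℝ E]
    (Φ : Finset E) (hΦ0 : ∀ α ∈ Φ, α ≠ 0)
    (aplus : Set E) (haplus : aplus = {x | ∀ α ∈ Φ, 0 < ⟪α, x⟫})
    (j : E → ℝ) (hj : ∀ x, j x = -2 * ∑ α ∈ Φ, Real.log (Real.sinh ⟪α, x⟫))
    (δ₀ M D k : ℝ) (hδ₀ : 0 < δ₀) (hM : 0 < M) (hD : 0 < D) (hk : 0 < k)
    (S : Finset E) (hS : S ⊆ Φ) :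
    ∃ ε : ℝ, 0 < ε ∧
      ∀ ψ : E → ℝ, ConvexOn ℝ aplus ψ → (∀ x ∈ aplus, DifferentiableAt ℝ ψ x) →
        (∀ x ∈ aplus, ‖gradient ψ x‖ ≤ M) →
        ∀ x₀ ∈ aplus, (∀ α ∈ Φ, δ₀ ≤ ⟪α, x₀⟫) →
          ∀ x ∈ aplus, ‖x - x₀‖ ≤ D → ψ x + j x ≤ ψ x₀ + j x₀ + k →
            ∀ α' ∈ S, ε ≤ ⟪α', x⟫ := by
  classical
  set c : ℝ := 1 + Real.cosh δ₀ / Real.sinh δ₀ with hc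
  have hsδ₀ : 0 < Real.sinh δ₀ := Real.sinh_pos_iff.2 hδ₀
  have hc1 : 1 ≤ c := by
    have h0 : 0 < Real.cosh δ₀ / Real.sinh δ₀ := div_pos (Real.cosh_pos δ₀) hsδ₀
    rw [hc]; linarith
  set L : ℝ := ∑ α ∈ Φ, (‖α‖ * D + Real.log c) with hL
  set K : ℝ := (k + M * D) / 2 with hK
  set B : ℝ := Real.log (Real.sinh δ₀) - K - L with hB
  refine ⟨Real.arsinh (Real.exp B), Real.arsinh_pos_iff.2 (Real.exp_pos B), ?_⟩
  intro ψ hconv hdiff hgrad x₀ hx₀ hx₀δ x hx hxD hw α' hα'S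
  have hα'Φ : α' ∈ Φ := hS hα'S
  -- aplus is convex
  have haconv : Convex ℝ aplus := by
    rw [haplus]
    intro u hu v hv a b ha hb hab
    intro α hα
    have hu' := hu α hα
    have hv' := hv α hα
    simp only [inner_add_right, real_inner_smul_right]
    rcases ha.eq_or_lt with h | h
    · have hb1 : b = 1 := by linarith
      simp [← h, hb1]; linarith
    · nlinarith [mul_nonneg hb (le_of_lt hv')]
  -- ψ is M-Lipschitz on aplus
  have hfd : ∀ y ∈ aplus, ‖fderiv ℝ ψ y‖ ≤ M := by
    intro y hy
    have : ‖fderiv ℝ ψ y‖ = ‖gradient ψ y‖ := by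
      rw [gradient]
      exact ((InnerProductSpace.toDual ℝ E).symm.norm_map _).symm
    rw [this]; exact hgrad y hy
  have hlip : ‖ψ x - ψ x₀‖ ≤ M * ‖x - x₀‖ :=
    haconv.norm_image_sub_le_of_norm_fderiv_le hdiff hfd hx₀ hx
  have hψ : ψ x₀ - ψ x ≤ M * D := by
    have h1 : ψ x₀ - ψ x ≤ ‖ψ x - ψ x₀‖ := by
      rw [Real.norm_eq_abs, abs_sub_comm]; exact le_abs_self _
    have h2 : M * ‖x - x₀‖ ≤ M * D := mul_le_mul_of_nonneg_left hxD hM.le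
    linarith
  -- sum inequality
  set f : E → ℝ := fun α => Real.log (Real.sinh ⟪α, x⟫) with hf
  set g : E → ℝ := fun α => Real.log (Real.sinh ⟪α, x₀⟫) with hg
  have hsum : ∑ α ∈ Φ, (g α - f α) ≤ K := by
    have hjx := hj x
    have hjx₀ := hj x₀
    rw [Finset.sum_sub_distrib]
    have : -2 * ∑ α ∈ Φ, f α ≤ -2 * ∑ α ∈ Φ, g α + k + M * D := by
      rw [← hjx, ← hjx₀]; linarith
    rw [hK]; linarith
  -- lower bound for each term
  have hxpos : ∀ α ∈ Φ, 0 < ⟪α, x⟫ := by rw [haplus] at hx; exact hx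
  have hterm : ∀ α ∈ Φ, -(‖α‖ * D + Real.log c) ≤ g α - f α := by
    intro α hα
    have h1 : ⟪α, x⟫ ≤ ⟪α, x₀⟫ + ‖α‖ * D := by
      have : ⟪α, x - x₀⟫ ≤ ‖α‖ * ‖x - x₀‖ := real_inner_le_norm α (x - x₀)
      have h2 : ‖α‖ * ‖x - x₀‖ ≤ ‖α‖ * D := mul_le_mul_of_nonneg_left hxD (norm_nonneg α)
      rw [inner_sub_right] at this
      linarith
    have := logsinh_aux δ₀ ⟪α, x₀⟫ ⟪α, x⟫ (‖α‖ * D) hδ₀ (hx₀δ α hα) (hxpos α hα) h1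
      (by positivity)
    simp only [hf, hg]
    linarith
  -- nonnegativity of the L terms
  have hLterm : ∀ α ∈ Φ, 0 ≤ ‖α‖ * D + Real.log c := by
    intro α _
    have h1 : 0 ≤ Real.log c := Real.log_nonneg hc1
    have h2 : 0 ≤ ‖α‖ * D := by positivity
    linarith
  -- isolate the α' term
  have hsplit : ∑ α ∈ Φ.erase α', (g α - f α) + (g α' - f α') = ∑ α ∈ Φ, (g α - f α) :=
    Finset.sum_erase_add Φ _ hα'Φ
  have herase : -(∑ α ∈ Φ.erase α', (‖α‖ * D + Real.log c)) ≤ ∑ α ∈ Φ.erase α', (g α - f α) := by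
    rw [← Finset.sum_neg_distrib]
    exact Finset.sum_le_sum fun α hα => hterm α (Finset.mem_of_mem_erase hα)
  have heraseL : ∑ α ∈ Φ.erase α', (‖α‖ * D + Real.log c) ≤ L := by
    rw [hL]
    exact Finset.sum_le_sum_of_subset_of_nonneg (Finset.erase_subset _ _)
      (fun α hα _ => hLterm α hα)
  have hdα' : g α' - f α' ≤ K + L := by linarith
  have hgα' : Real.log (Real.sinh δ₀) ≤ g α' := by
    simp only [hg]
    exact Real.log_le_log hsδ₀ (Real.sinh_le_sinh.2 (hx₀δ α' hα'Φ))
  have hfα' : B ≤ f α' := by rw [hB]; linarith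
  -- conclude
  have hsinh : Real.exp B ≤ Real.sinh ⟪α', x⟫ := by
    have := Real.exp_le_exp.2 hfα'
    rwa [Real.exp_log (Real.sinh_pos_iff.2 (hxpos α' hα'Φ))] at this
  calc Real.arsinh (Real.exp B) ≤ Real.arsinh (Real.sinh ⟪α', x⟫) :=
        Real.arsinh_le_arsinh.2 hsinh
    _ = ⟪α', x⟫ := Real.arsinh_sinh _
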